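/- Let N ≥ 2 and let Γ : ℝ → ℝ be 2π-periodic, twice continuously differentiable on ℝ ∖ 2πℤ, with Γ'(θ) > 0 for all θ ∈ (0,2π) and either Γ''(θ) > 0 for all θ ∈ (0,2π) or Γ''(θ) < 0 for all θ ∈ (0,2π). Consider the relative phase dynamics φ̇ᵢ = Γ(φᵢ) + Σ_{j=1, j≠i}^{N−1} Γ(φᵢ − φ_j) − Σ_{j=1}^{N−1} Γ(−φ_j), i = 1,…,N−1, on the open cone C = {φ ∈ ℝ^{N−1} : 0 < φ₁ < φ₂ < ⋯ < φ_{N−1} < 2π}. Then the dynamics are expanding in C with respect to the 1-norm: for any two continuously differentiable solutions φ, ψ : [0,T] → C of these dynamics with φ(t) ≠ ψ(t) for all t ∈ [0,T], the function t ↦ ‖φ(t) − ψ(t)‖ is strictly increasing on [0,T]. -/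

import Mathlib

open Real Set

/-- The open cone `C = {φ ∈ ℝ^{N−1} : 0 < φ₁ < φ₂ < ⋯ < φ_{N−1} < 2π}`. -/
def phaseCone {m : ℕ} : Set (Fin m → ℝ) :=
  {x | (∀ i, 0 < x i) ∧ StrictMono x ∧ ∀ i, x i < 2 * π}

/-- The 1-norm `‖φ‖ = |φ₁| + Σ_{k=1}^{N−2} |φ_k − φ_{k+1}| + |φ_{N−1}|`. -/
noncomputable def norm1 {m : ℕ} (x : Fin m → ℝ) : ℝ :=
  (if h : 0 < m then
      |x ⟨0, h⟩| + |x ⟨m - 1, Nat.sub_lt h Nat.one_pos⟩|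
    else 0) +
  ∑ k : Fin (m - 1),
    |x ⟨(k : ℕ), Nat.lt_of_lt_of_le k.isLt (Nat.sub_le m 1)⟩ -
      x ⟨(k : ℕ) + 1, Nat.add_lt_of_lt_sub k.isLt⟩|

/-- The vector field of the relative phase dynamics
`φ̇ᵢ = Γ(φᵢ) + Σ_{j≠i} Γ(φᵢ − φ_j) − Σ_j Γ(−φ_j)`. -/
noncomputable def relVF (Γ : ℝ → ℝ) {m : ℕ} (v : Fin m → ℝ) : Fin m → ℝ :=
  fun i => Γ (v i) + ∑ j ∈ Finset.univ.erase i, Γ (v i - v j) - ∑ j, Γ (-v j)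

open Filter

namespace MCE


lemma sum_shift_one (F : ℕ → ℝ) (n : ℕ) (hF : F n = F 0) :
    ∑ k ∈ Finset.range n, F (k+1) = ∑ k ∈ Finset.range n, F k := by
  cases n with
  | zero => simp
  | succ n =>
    rw [Finset.sum_range_succ (fun k => F (k+1)) n, Finset.sum_range_succ' F n]
    rw [hF]

lemma sum_shift (F : ℕ → ℝ) (n : ℕ) (hF : ∀ k, F (k + n) = F k) (j : ℕ) :
    ∑ k ∈ Finset.range n, F (j + k) = ∑ k ∈ Finset.range n, F k := by
  induction j with
  | zero => simp
  | succ j ih =>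
    rw [← ih]
    have h1 : ∑ k ∈ Finset.range n, F (j + 1 + k) = ∑ k ∈ Finset.range n, F (j + (k + 1)) := by
      apply Finset.sum_congr rfl; intro k _; congr 1; omega
    rw [h1]
    exact sum_shift_one (fun k => F (j + k)) n (by simpa using hF j)

lemma sum_by_parts (s g : ℕ → ℝ) (p q : ℕ) (hp : 1 ≤ p) (hpq : p ≤ q) :
    ∑ r ∈ Finset.Ico p (q+1), (s r - s (r-1)) * g r
      = s q * g q - s (p-1) * g p + ∑ r ∈ Finset.Ico p q, s r * (g r - g (r+1)) := by
  induction q, hpq using Nat.le_induction with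
  | base =>
    rw [Finset.sum_Ico_succ_top le_rfl]
    simp only [Finset.Ico_self, Finset.sum_empty]
    ring
  | succ q hq ih =>
    rw [Finset.sum_Ico_succ_top (by omega : p ≤ q + 1), ih,
      Finset.sum_Ico_succ_top (by omega : p ≤ q)]
    have : (q + 1 : ℕ) - 1 = q := by omega
    rw [this]; ring

lemma telescope (g : ℕ → ℝ) (p q : ℕ) (hpq : p ≤ q) :
    g p - g q = ∑ r ∈ Finset.Ico p q, (g r - g (r+1)) := by
  induction q, hpq using Nat.le_induction with
  | base => simp
  | succ q hq ih =>
    rw [Finset.sum_Ico_succ_top (by omega : p ≤ q), ← ih]; ring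

lemma abel_tail (W b : ℕ → ℝ) (n : ℕ) (hn : 2 ≤ n)
    (hT : ∀ p, 1 ≤ p → p < n → 0 ≤ ∑ r ∈ Finset.Ico p n, b r)
    (hW : ∀ r, 1 ≤ r → r + 1 < n → W r ≤ W (r+1)) :
    W 1 * ∑ r ∈ Finset.Ico 1 n, b r ≤ ∑ r ∈ Finset.Ico 1 n, W r * b r := by
  suffices h : ∀ d p, 1 ≤ p → p < n → n - p = d + 1 →
      W p * ∑ r ∈ Finset.Ico p n, b r ≤ ∑ r ∈ Finset.Ico p n, W r * b r by
    exact h (n - 2) 1 le_rfl (by omega) (by omega)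
  intro d
  induction d with
  | zero =>
    intro p h1 h2 h3
    have : n = p + 1 := by omega
    subst this
    simp [Finset.sum_Ico_succ_top]
  | succ d ih =>
    intro p h1 h2 h3
    have hpn : p + 1 < n := by omega
    rw [Finset.sum_eq_sum_Ico_succ_bot (by omega : p < n),
        Finset.sum_eq_sum_Ico_succ_bot (by omega : p < n) (fun r => W r * b r)]
    have hS : 0 ≤ ∑ r ∈ Finset.Ico (p+1) n, b r := hT (p+1) (by omega) hpn
    have h4 : W p * ∑ r ∈ Finset.Ico (p+1) n, b r ≤ W (p+1) * ∑ r ∈ Finset.Ico (p+1) n, b r := by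
      apply mul_le_mul_of_nonneg_right _ hS
      exact hW p h1 hpn
    have h5 := ih (p+1) (by omega) hpn (by omega)
    nlinarith [h4, h5]

lemma abel_prefix (W b : ℕ → ℝ) (n : ℕ) (hn : 2 ≤ n)
    (hA : ∀ q, 1 ≤ q → q < n → 0 ≤ ∑ r ∈ Finset.Ico 1 (q+1), b r)
    (hW : ∀ r, 1 ≤ r → r + 1 < n → W (r+1) ≤ W r) :
    W (n-1) * ∑ r ∈ Finset.Ico 1 n, b r ≤ ∑ r ∈ Finset.Ico 1 n, W r * b r := by
  suffices h : ∀ q, 1 ≤ q → q < n →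
      W q * ∑ r ∈ Finset.Ico 1 (q+1), b r ≤ ∑ r ∈ Finset.Ico 1 (q+1), W r * b r by
    have := h (n-1) (by omega) (by omega)
    have hn1 : n - 1 + 1 = n := by omega
    rwa [hn1] at this
  intro q h1 h2
  induction q, h1 using Nat.le_induction with
  | base => simp [Finset.sum_Ico_succ_top]
  | succ q hq ih =>
    have h5 := ih (by omega)
    rw [Finset.sum_Ico_succ_top (by omega : 1 ≤ q + 1),
        Finset.sum_Ico_succ_top (by omega : 1 ≤ q + 1) (fun r => W r * b r)]
    have hS : 0 ≤ ∑ r ∈ Finset.Ico 1 (q+1), b r := hA q (by omega) (by omega)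
    have h4 : W (q+1) * ∑ r ∈ Finset.Ico 1 (q+1), b r ≤ W q * ∑ r ∈ Finset.Ico 1 (q+1), b r := by
      apply mul_le_mul_of_nonneg_right _ hS
      exact hW q (by omega) (by omega)
    nlinarith [h4, h5]



lemma nondecreasing_of_right_growth (f : ℝ → ℝ) (T : ℝ)
    (hcont : ContinuousOn f (Icc 0 T))
    (hgrow : ∀ t ∈ Icc (0:ℝ) T, t < T → ∃ δ > 0, ∀ u, t < u → u ≤ T → u < t + δ → f t < f u)
    {u v : ℝ} (hu : u ∈ Icc (0:ℝ) T) (hv : v ∈ Icc (0:ℝ) T) (huv : u ≤ v) :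
    f u ≤ f v := by
  set A : Set ℝ := {x | x ∈ Icc u v ∧ f u ≤ f x} with hA
  have hsub : Icc u v ⊆ Icc 0 T := Icc_subset_Icc hu.1 hv.2
  have hclosed : IsClosed A := by
    have : A = Icc u v ∩ f ⁻¹' (Ici (f u)) := by
      ext x; simp [hA]
    rw [this]
    exact ContinuousOn.preimage_isClosed_of_isClosed (hcont.mono hsub) isClosed_Icc isClosed_Ici
  have hAne : A.Nonempty := ⟨u, ⟨⟨le_rfl, huv⟩, le_rfl⟩⟩
  have hbdd : BddAbove A := ⟨v, fun x hx => hx.1.2⟩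
  set w := sSup A with hw
  have hwA : w ∈ A := hclosed.csSup_mem hAne hbdd
  rcases eq_or_lt_of_le hwA.1.2 with h | h
  · rw [← h]; exact hwA.2
  · exfalso
    have hwIcc : w ∈ Icc (0:ℝ) T := hsub hwA.1
    have hwT : w < T := lt_of_lt_of_le h hv.2
    obtain ⟨δ, hδ, hgw⟩ := hgrow w hwIcc hwT
    set u' := min v (w + δ/2) with hu'
    have hwu' : w < u' := lt_min h (by linarith)
    have hu'v : u' ≤ v := min_le_left _ _
    have hu'T : u' ≤ T := le_trans hu'v hv.2
    have hu'δ : u' < w + δ := lt_of_le_of_lt (min_le_right _ _) (by linarith)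
    have hfu' : f w < f u' := hgw u' hwu' hu'T hu'δ
    have : u' ∈ A := ⟨⟨le_trans hwA.1.1 hwu'.le, hu'v⟩, le_trans hwA.2 hfu'.le⟩
    have : u' ≤ w := le_csSup hbdd this
    linarith

lemma strictMonoOn_of_right_growth (f : ℝ → ℝ) (T : ℝ)
    (hcont : ContinuousOn f (Icc 0 T))
    (hgrow : ∀ t ∈ Icc (0:ℝ) T, t < T → ∃ δ > 0, ∀ u, t < u → u ≤ T → u < t + δ → f t < f u) :
    StrictMonoOn f (Icc (0:ℝ) T) := by
  intro u hu v hv huv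
  have huT : u < T := lt_of_lt_of_le huv hv.2
  obtain ⟨δ, hδ, hgu⟩ := hgrow u hu huT
  set u' := min v (u + δ/2) with hu'
  have huu' : u < u' := lt_min huv (by linarith)
  have hu'v : u' ≤ v := min_le_left _ _
  have hu'T : u' ≤ T := le_trans hu'v hv.2
  have hu'δ : u' < u + δ := lt_of_le_of_lt (min_le_right _ _) (by linarith)
  have h1 : f u < f u' := hgu u' huu' hu'T hu'δ
  have hu'Icc : u' ∈ Icc (0:ℝ) T := ⟨le_trans hu.1 huu'.le, hu'T⟩
  have h2 : f u' ≤ f v := nondecreasing_of_right_growth f T hcont hgrow hu'Icc hv hu'v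
  linarith

lemma right_growth_of_active {f g : ℝ → ℝ} {T t : ℝ} {D : ℝ}
    (hle : ∀ u ∈ Icc (0:ℝ) T, g u ≤ f u) (heq : g t = f t)
    (hg : HasDerivAt g D t) (hD : 0 < D) :
    ∃ δ > 0, ∀ u, t < u → u ≤ T → u < t + δ → 0 ≤ u → f t < f u := by
  have hslope : Tendsto (slope g t) (nhdsWithin t {t}ᶜ) (nhds D) :=
    hasDerivAt_iff_tendsto_slope.1 hg
  have hev : ∀ᶠ x in nhdsWithin t {t}ᶜ, 0 < slope g t x :=
    hslope.eventually (eventually_gt_nhds hD)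
  have hev2 : ∀ᶠ x in nhdsWithin t (Ioi t), 0 < slope g t x :=
    hev.filter_mono (nhdsWithin_mono t (fun x hx => ne_of_gt hx))
  rw [eventually_iff, mem_nhdsGT_iff_exists_Ioo_subset] at hev2
  obtain ⟨u₀, hu₀, hsubset⟩ := hev2
  refine ⟨u₀ - t, by simpa using hu₀, fun u htu huT huδ hu0 => ?_⟩
  have : 0 < slope g t u := hsubset ⟨htu, by linarith⟩
  rw [slope_def_field] at this
  have hgu : g t < g u := by
    have h3 : 0 < u - t := by linarith
    have := mul_pos this h3
    rw [div_mul_cancel₀] at this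
    · linarith
    · exact ne_of_gt h3
  calc f t = g t := heq.symm
    _ < g u := hgu
    _ ≤ f u := hle u ⟨hu0, huT⟩



noncomputable def extF {m : ℕ} (v : Fin m → ℝ) (k : ℕ) : ℝ :=
  if h : k % (m+1) = 0 then 0
  else v ⟨k % (m+1) - 1, by have := Nat.mod_lt k (show 0 < m + 1 by omega); omega⟩

lemma extF_mod {m : ℕ} (v : Fin m → ℝ) (k : ℕ) : extF v (k % (m+1)) = extF v k := by
  simp only [extF, Nat.mod_mod_of_dvd k (dvd_refl (m+1))]

lemma extF_add_period {m : ℕ} (v : Fin m → ℝ) (k : ℕ) : extF v (k + (m+1)) = extF v k := by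
  simp only [extF, Nat.add_mod_right]

lemma extF_zero {m : ℕ} (v : Fin m → ℝ) : extF v 0 = 0 := by
  simp [extF]

lemma extF_eq {m : ℕ} (v : Fin m → ℝ) (i : ℕ) (h1 : 1 ≤ i) (h2 : i ≤ m) :
    extF v i = v ⟨i - 1, by omega⟩ := by
  have hi : i % (m+1) = i := Nat.mod_eq_of_lt (by omega)
  simp only [extF, hi]
  rw [dif_neg (by omega)]

lemma extF_nonneg {m : ℕ} {v : Fin m → ℝ} (hv : v ∈ phaseCone) (k : ℕ) : 0 ≤ extF v k := by
  unfold extF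
  split
  · exact le_rfl
  · exact (hv.1 _).le

lemma extF_lt_two_pi {m : ℕ} {v : Fin m → ℝ} (hv : v ∈ phaseCone) (k : ℕ) :
    extF v k < 2 * π := by
  unfold extF
  split
  · positivity
  · exact hv.2.2 _

lemma extF_mono_res {m : ℕ} {v : Fin m → ℝ} (hv : v ∈ phaseCone) {a b : ℕ}
    (hab : a < b) (hb : b < m + 1) : extF v a < extF v b := by
  have hb' : extF v b = v ⟨b - 1, by omega⟩ := extF_eq v b (by omega) (by omega)
  rcases Nat.eq_zero_or_pos a with h | h
  · subst h; rw [extF_zero, hb']; exact hv.1 _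
  · rw [hb', extF_eq v a (by omega) (by omega)]
    exact hv.2.1 (by simp [Fin.mk_lt_mk]; omega)

noncomputable def liftP {m : ℕ} (v : Fin m → ℝ) (k : ℕ) : ℝ :=
  extF v k + 2 * π * (k / (m+1) : ℕ)

lemma liftP_add_period {m : ℕ} (v : Fin m → ℝ) (k : ℕ) :
    liftP v (k + (m+1)) = liftP v k + 2 * π := by
  unfold liftP
  rw [extF_add_period, Nat.add_div_right k (Nat.succ_pos m)]
  push_cast; ring

lemma liftP_strictMono {m : ℕ} {v : Fin m → ℝ} (hv : v ∈ phaseCone) :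
    StrictMono (liftP v) := by
  intro k l hkl
  have hdiv : k / (m+1) ≤ l / (m+1) := Nat.div_le_div_right hkl.le
  unfold liftP
  rcases eq_or_lt_of_le hdiv with h | h
  · rw [← h]
    have hmod : k % (m+1) < l % (m+1) := by
      have h1 := Nat.div_add_mod k (m+1)
      have h2 := Nat.div_add_mod l (m+1)
      rw [← h] at h2
      generalize (m+1) * (k / (m+1)) = t at h1 h2
      omega
    have := extF_mono_res hv hmod (Nat.mod_lt l (Nat.succ_pos m))
    rw [extF_mod, extF_mod] at this
    linarith
  · have h1 : (k / (m+1) : ℕ) + 1 ≤ (l / (m+1) : ℕ) := h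
    have h2 : ((k / (m+1) : ℕ) : ℝ) + 1 ≤ ((l / (m+1) : ℕ) : ℝ) := by exact_mod_cast h1
    have h3 : extF v k < 2 * π := extF_lt_two_pi hv k
    have h4 : 0 ≤ extF v l := extF_nonneg hv l
    nlinarith [pi_pos]

lemma liftP_sub_extF {m : ℕ} (v : Fin m → ℝ) (k : ℕ) :
    liftP v k - extF v k = 2 * π * (k / (m+1) : ℕ) := by
  unfold liftP; ring

lemma periodic_lift {Γ : ℝ → ℝ} (hper : Function.Periodic Γ (2 * π))
    {m : ℕ} (v : Fin m → ℝ) (i j : ℕ) :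
    Γ (extF v i - extF v j) = Γ (liftP v i - liftP v j) := by
  obtain ⟨n1, hn1⟩ : ∃ n1, n1 = i / (m+1) := ⟨_, rfl⟩
  obtain ⟨n2, hn2⟩ : ∃ n2, n2 = j / (m+1) := ⟨_, rfl⟩
  have h : liftP v i - liftP v j
      = (extF v i - extF v j) + (((n1 : ℤ) - (n2 : ℤ) : ℤ) : ℝ) * (2 * π) := by
    unfold liftP; rw [← hn1, ← hn2]; push_cast; ring
  rw [h, hper.int_mul _ _]

lemma vmk_eq {m : ℕ} (v : Fin m → ℝ) {a b : ℕ} (ha : a < m) (hb : b < m) (h : a = b) :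
    v ⟨a, ha⟩ = v ⟨b, hb⟩ := by subst h; rfl

lemma vmk_eq_fin {m : ℕ} (v : Fin m → ℝ) {a : ℕ} (ha : a < m) (j : Fin m) (h : a = (j:ℕ)) :
    v ⟨a, ha⟩ = v j := by
  cases j; subst h; rfl

lemma abs_sub_congr (a b c d : ℝ) (h1 : a = c) (h2 : b = d) : |a - b| = |c - d| := by
  rw [h1, h2]

lemma norm1_eq {m : ℕ} (hm : 1 ≤ m) (v : Fin m → ℝ) :
    norm1 v = ∑ k ∈ Finset.range (m+1), |extF v k - extF v (k+1)| := by
  obtain ⟨m', rfl⟩ : ∃ m', m = m' + 1 := ⟨m - 1, by omega⟩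
  rw [Finset.sum_range_succ, Finset.sum_range_succ']
  have hF0 : |extF v 0 - extF v 1| = |v ⟨0, by omega⟩| := by
    rw [extF_zero, extF_eq v 1 le_rfl (by omega), zero_sub, abs_neg]
  have hFtop : |extF v (m'+1) - extF v (m'+1+1)| = |v ⟨m', by omega⟩| := by
    have h2 : extF v (m'+1+1) = extF v 0 := by
      have := extF_add_period v 0
      simpa using this
    rw [h2, extF_zero, sub_zero, extF_eq v (m'+1) (by omega) le_rfl]
    exact congrArg (|·|) (vmk_eq v _ _ (by omega))
  rw [hF0, hFtop]
  set G : ℕ → ℝ := fun k => |v ⟨k % (m'+1), Nat.mod_lt k (by omega)⟩ -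
      v ⟨(k+1) % (m'+1), Nat.mod_lt (k+1) (by omega)⟩| with hG
  have hty : m' + 1 - 1 = m' := by omega
  have hL : ∑ k : Fin (m' + 1 - 1),
      |v ⟨(k : ℕ), Nat.lt_of_lt_of_le k.isLt (Nat.sub_le (m'+1) 1)⟩ -
        v ⟨(k : ℕ) + 1, Nat.add_lt_of_lt_sub k.isLt⟩|
      = ∑ k ∈ Finset.range m', G k := by
    have step1 : ∀ k : Fin (m' + 1 - 1),
        |v ⟨(k : ℕ), Nat.lt_of_lt_of_le k.isLt (Nat.sub_le (m'+1) 1)⟩ -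
          v ⟨(k : ℕ) + 1, Nat.add_lt_of_lt_sub k.isLt⟩| = G (k : ℕ) := by
      intro k
      have hk : (k : ℕ) < m' := by have := k.isLt; omega
      simp only [hG]
      exact abs_sub_congr _ _ _ _
        (vmk_eq v _ _ (by rw [Nat.mod_eq_of_lt (by omega)]))
        (vmk_eq v _ _ (by rw [Nat.mod_eq_of_lt (by omega)]))
    calc ∑ k : Fin (m' + 1 - 1),
        |v ⟨(k : ℕ), Nat.lt_of_lt_of_le k.isLt (Nat.sub_le (m'+1) 1)⟩ -
          v ⟨(k : ℕ) + 1, Nat.add_lt_of_lt_sub k.isLt⟩|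
        = ∑ k : Fin (m' + 1 - 1), G (k : ℕ) := Finset.sum_congr rfl (fun k _ => step1 k)
      _ = ∑ k ∈ Finset.range (m' + 1 - 1), G k := Fin.sum_univ_eq_sum_range G _
      _ = ∑ k ∈ Finset.range m', G k := by rw [hty]
  have hR : ∀ k ∈ Finset.range m', |extF v (k+1) - extF v (k+1+1)| = G k := by
    intro k hk
    rw [Finset.mem_range] at hk
    rw [extF_eq v (k+1) (by omega) (by omega), extF_eq v (k+1+1) (by omega) (by omega)]
    simp only [hG]
    exact abs_sub_congr _ _ _ _
      (vmk_eq v _ _ (by rw [Nat.mod_eq_of_lt (by omega)]; omega))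
      (vmk_eq v _ _ (by rw [Nat.mod_eq_of_lt (by omega)]; omega))
  rw [Finset.sum_congr rfl hR]
  unfold norm1
  rw [dif_pos (by omega : 0 < m' + 1)]
  rw [hL]
  have e : ∀ (h : m' + 1 - 1 < m' + 1) (h2 : m' < m' + 1),
      v ⟨m' + 1 - 1, h⟩ = v ⟨m', h2⟩ := fun h h2 => vmk_eq v h h2 (by omega)
  rw [e _ (by omega)]
  ring


lemma mod_mid {n a : ℕ} (h1 : n ≤ a) (h2 : a < 2*n) : a % n = a - n := by
  rw [Nat.mod_eq_sub_mod h1, Nat.mod_eq_of_lt (by omega)]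

lemma extF_eq' {m : ℕ} (v : Fin m → ℝ) (k : ℕ) (h : k % (m+1) ≠ 0) :
    extF v k = v ⟨k % (m+1) - 1, by have := Nat.mod_lt k (show 0 < m+1 by omega); omega⟩ := by
  simp only [extF, dif_neg h]

lemma extF_sub {m : ℕ} (u v : Fin m → ℝ) (k : ℕ) :
    extF (u - v) k = extF u k - extF v k := by
  unfold extF; split <;> simp

lemma relVF_ext {m : ℕ} (Γ : ℝ → ℝ) (v : Fin m → ℝ) (hm : 1 ≤ m) (i : ℕ)
    (h1 : 1 ≤ i) (h2 : i ≤ m) :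
    relVF Γ v ⟨i - 1, by omega⟩
      = (∑ r ∈ Finset.Ico 1 (m+1), Γ (extF v i - extF v (i+r)))
        - ∑ r ∈ Finset.Ico 1 (m+1), Γ (extF v 0 - extF v r) := by
  have hsum2 : ∑ r ∈ Finset.Ico 1 (m+1), Γ (extF v 0 - extF v r) = ∑ j : Fin m, Γ (-v j) := by
    rw [Finset.sum_Ico_eq_sum_range]
    have hh : m + 1 - 1 = m := by omega
    rw [hh, ← Fin.sum_univ_eq_sum_range (fun k => Γ (extF v 0 - extF v (1 + k))) m]
    apply Finset.sum_congr rfl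
    intro j _
    rw [extF_zero, extF_eq v (1 + (j:ℕ)) (by omega) (by omega), zero_sub]
    exact congrArg (fun x => Γ (-x)) (vmk_eq_fin v _ j (by omega))
  have hr0mem : m + 1 - i ∈ Finset.Ico 1 (m+1) := by
    simp only [Finset.mem_Ico]; omega
  have hFr0 : Γ (extF v i - extF v (i + (m+1-i))) = Γ (v ⟨i-1, by omega⟩) := by
    have e1 : i + (m+1-i) = m+1 := by omega
    rw [e1]
    have e2 : extF v (m+1) = 0 := by
      have := extF_add_period v 0
      simpa [extF_zero] using this
    rw [e2, sub_zero, extF_eq v i h1 h2]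
  have hsum1 : ∑ r ∈ Finset.Ico 1 (m+1), Γ (extF v i - extF v (i+r))
      = Γ (v ⟨i-1, by omega⟩)
        + ∑ j ∈ Finset.univ.erase (⟨i-1, by omega⟩ : Fin m), Γ (v ⟨i-1, by omega⟩ - v j) := by
    rw [← Finset.sum_erase_add _ _ hr0mem, hFr0, add_comm]
    congr 1
    apply Finset.sum_nbij'
      (i := fun r => (⟨(i+r) % (m+1) - 1, by
        have := Nat.mod_lt (i+r) (show 0 < m+1 by omega); omega⟩ : Fin m))
      (j := fun j => ((j:ℕ) + 1 + (m+1) - i) % (m+1))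
    · -- maps into target
      intro r hr
      simp only [Finset.mem_erase, Finset.mem_Ico] at hr
      simp only [Finset.mem_erase, Finset.mem_univ, and_true]
      intro hcontra
      have hval : (i+r) % (m+1) - 1 = i - 1 := by
        have := congrArg Fin.val hcontra
        simpa using this
      rcases lt_or_ge (i+r) (m+1) with hc | hc
      · rw [Nat.mod_eq_of_lt hc] at hval; omega
      · rw [mod_mid hc (by omega)] at hval; omega
    · -- maps back
      intro j hj
      simp only [Finset.mem_erase, Finset.mem_univ, and_true] at hj
      simp only [Finset.mem_erase, Finset.mem_Ico]
      have hjv : (j:ℕ) < m := j.isLt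
      have hjne : (j:ℕ) ≠ i - 1 := by
        intro hcontra; exact hj (Fin.ext (by simpa using hcontra))
      rcases lt_or_ge i ((j:ℕ)+1) with hc | hc
      · have e1 : (j:ℕ) + 1 + (m+1) - i = ((j:ℕ) + 1 - i) + (m+1) := by omega
        rw [e1, Nat.add_mod_right, Nat.mod_eq_of_lt (show (j:ℕ) + 1 - i < m + 1 by omega)]
        omega
      · have e1 : (j:ℕ) + 1 + (m+1) - i < m + 1 := by omega
        rw [Nat.mod_eq_of_lt e1]
        omega
    · -- left inverse
      intro r hr
      simp only [Finset.mem_erase, Finset.mem_Ico] at hr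
      simp only [Fin.val_mk]
      rcases lt_or_ge (i+r) (m+1) with hc | hc
      · rw [Nat.mod_eq_of_lt hc]
        have e1 : i + r - 1 + 1 + (m+1) - i = r + (m+1) := by omega
        rw [e1, Nat.add_mod_right, Nat.mod_eq_of_lt (show r < m + 1 by omega)]
      · rw [mod_mid hc (by omega)]
        have e1 : i + r - (m+1) - 1 + 1 + (m+1) - i = r := by omega
        rw [e1, Nat.mod_eq_of_lt (show r < m + 1 by omega)]
    · -- right inverse
      intro j hj
      simp only [Finset.mem_erase, Finset.mem_univ, and_true] at hj
      have hjv : (j:ℕ) < m := j.isLt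
      have hjne : (j:ℕ) ≠ i - 1 := by
        intro hcontra; exact hj (Fin.ext (by simpa using hcontra))
      apply Fin.ext
      simp only
      rcases lt_or_ge i ((j:ℕ)+1) with hc | hc
      · have e1 : (j:ℕ) + 1 + (m+1) - i = ((j:ℕ) + 1 - i) + (m+1) := by omega
        rw [e1, Nat.add_mod_right, Nat.mod_eq_of_lt (show (j:ℕ) + 1 - i < m + 1 by omega)]
        have e2 : i + ((j:ℕ) + 1 - i) = (j:ℕ) + 1 := by omega
        rw [e2, Nat.mod_eq_of_lt (show (j:ℕ) + 1 < m + 1 by omega)]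
        omega
      · have e1 : (j:ℕ) + 1 + (m+1) - i < m + 1 := by omega
        rw [Nat.mod_eq_of_lt e1]
        have e2 : i + ((j:ℕ) + 1 + (m+1) - i) = ((j:ℕ) + 1) + (m+1) := by omega
        rw [e2, Nat.add_mod_right, Nat.mod_eq_of_lt (show (j:ℕ) + 1 < m + 1 by omega)]
        omega
    · -- values
      intro r hr
      simp only [Finset.mem_erase, Finset.mem_Ico] at hr
      have hmod : (i+r) % (m+1) ≠ 0 := by
        rcases lt_or_ge (i+r) (m+1) with hc | hc
        · rw [Nat.mod_eq_of_lt hc]; omega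
        · rw [mod_mid hc (by omega)]; omega
      rw [extF_eq v i h1 h2, extF_eq' v (i+r) hmod]
  rw [hsum1, hsum2]
  unfold relVF
  ring

lemma pair_reindex (n : ℕ) (F : ℕ → ℕ → ℝ)
    (hF1 : ∀ a b, F (a + n) b = F a b) (hF2 : ∀ a b, F a (b + n) = F a b) :
    ∑ i ∈ Finset.range n, ∑ r ∈ Finset.Ico 1 n, F i (i+r)
      = ∑ j ∈ Finset.range n, ∑ r ∈ Finset.Ico 1 n, F (j+r) (j+n) := by
  rw [← Finset.sum_product' (s := Finset.range n) (t := Finset.Ico 1 n)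
      (f := fun i r => F i (i+r)),
    ← Finset.sum_product' (s := Finset.range n) (t := Finset.Ico 1 n)
      (f := fun j r => F (j+r) (j+n))]
  apply Finset.sum_nbij'
    (i := fun p => (((p.1 + p.2) % n), n - p.2))
    (j := fun p => (((p.1 + p.2) % n), n - p.2))
  · intro p hp
    simp only [Finset.mem_product, Finset.mem_range, Finset.mem_Ico] at hp ⊢
    constructor
    · exact Nat.mod_lt _ (by omega)
    · omega
  · intro p hp
    simp only [Finset.mem_product, Finset.mem_range, Finset.mem_Ico] at hp ⊢
    constructor
    · exact Nat.mod_lt _ (by omega)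
    · omega
  · intro p hp
    simp only [Finset.mem_product, Finset.mem_range, Finset.mem_Ico] at hp
    obtain ⟨h1, h2, h3⟩ := hp
    have hn : 0 < n := by omega
    ext
    · simp only
      rcases lt_or_ge (p.1 + p.2) n with hc | hc
      · rw [Nat.mod_eq_of_lt hc]
        have e1 : p.1 + p.2 + (n - p.2) = p.1 + n := by omega
        rw [e1, Nat.add_mod_right, Nat.mod_eq_of_lt h1]
      · rw [mod_mid hc (by omega)]
        have e1 : p.1 + p.2 - n + (n - p.2) = p.1 := by omega
        rw [e1, Nat.mod_eq_of_lt h1]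
    · simp only
      omega
  · intro p hp
    simp only [Finset.mem_product, Finset.mem_range, Finset.mem_Ico] at hp
    obtain ⟨h1, h2, h3⟩ := hp
    have hn : 0 < n := by omega
    ext
    · simp only
      rcases lt_or_ge (p.1 + p.2) n with hc | hc
      · rw [Nat.mod_eq_of_lt hc]
        have e1 : p.1 + p.2 + (n - p.2) = p.1 + n := by omega
        rw [e1, Nat.add_mod_right, Nat.mod_eq_of_lt h1]
      · rw [mod_mid hc (by omega)]
        have e1 : p.1 + p.2 - n + (n - p.2) = p.1 := by omega
        rw [e1, Nat.mod_eq_of_lt h1]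
    · simp only
      omega
  · intro p hp
    simp only [Finset.mem_product, Finset.mem_range, Finset.mem_Ico] at hp
    obtain ⟨h1, h2, h3⟩ := hp
    simp only
    rcases lt_or_ge (p.1 + p.2) n with hc | hc
    · rw [Nat.mod_eq_of_lt hc]
      have e1 : p.1 + p.2 + (n - p.2) = p.1 + n := by omega
      rw [e1, hF1, hF2]
    · rw [mod_mid hc (by omega)]
      have e1 : p.1 + p.2 - n + (n - p.2) = p.1 := by omega
      have e2 : p.1 + p.2 - n + n = p.1 + p.2 := by omega
      rw [e1, e2]

section Run

variable {n : ℕ} {E σf : ℕ → ℝ}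

lemma run_rewrite (hn : 1 ≤ n) (hE : ∀ k, E (k + n) = E k) (hσ : ∀ k, σf (k + n) = σf k)
    (j r : ℕ) (hr : 1 ≤ r) :
    (σf (j+r) - σf (j+r+(n-1))) * (E (j+r) - E (j+n))
      = (σf (j+n+r) - σf (j+n+r-1)) * (E (j+n+r) - E (j+2*n)) := by
  have e1 : σf (j+n+r) = σf (j+r) := by
    have := hσ (j+r); rw [← this]; congr 1; omega
  have e2 : σf (j+n+r-1) = σf (j+r+(n-1)) := by congr 1; omega
  have e3 : E (j+n+r) = E (j+r) := by
    have := hE (j+r); rw [← this]; congr 1; omega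
  have e4 : E (j+2*n) = E (j+n) := by
    have := hE (j+n); rw [← this]; congr 1; omega
  rw [e1, e2, e3, e4]

lemma run_parts (hn : 2 ≤ n) (hE : ∀ k, E (k + n) = E k) (hσ : ∀ k, σf (k + n) = σf k)
    (hσ1 : ∀ k, |σf k| = 1)
    (hcompat : ∀ k, σf k * (E k - E (k+1)) = |E k - E (k+1)|)
    (j p : ℕ) (hp : 1 ≤ p) (hpn : p < n) :
    ∑ r ∈ Finset.Ico p n, (σf (j+r) - σf (j+r+(n-1))) * (E (j+r) - E (j+n))
      = ∑ r ∈ Finset.Ico p n, |E (j+n+r) - E (j+n+r+1)|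
        - σf (j+n+p-1) * (E (j+n+p) - E (j+2*n)) := by
  set s : ℕ → ℝ := fun r => σf (j+n+r) with hs
  set g : ℕ → ℝ := fun r => E (j+n+r) - E (j+2*n) with hg
  have hgn : g n = 0 := by
    simp only [hg]
    have : j + n + n = j + 2*n := by omega
    rw [this, sub_self]
  have hterm : ∀ r : ℕ, s r * (g r - g (r+1)) = |E (j+n+r) - E (j+n+r+1)| := by
    intro r
    have h1 : g r - g (r+1) = E (j+n+r) - E (j+n+r+1) := by
      simp only [hg]
      have : j + n + (r+1) = j + n + r + 1 := by omega
      rw [this]; ring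
    rw [h1]
    have := hcompat (j+n+r)
    have h2 : j + n + r + 1 = j + n + r + 1 := rfl
    exact this
  have hrw : ∀ r ∈ Finset.Ico p n,
      (σf (j+r) - σf (j+r+(n-1))) * (E (j+r) - E (j+n)) = (s r - s (r-1)) * g r := by
    intro r hr
    rw [Finset.mem_Ico] at hr
    have := run_rewrite (by omega) hE hσ j r (le_trans hp hr.1)
    rw [this]
    simp only [hs, hg]
    have e1 : j + n + r - 1 = j + n + (r - 1) := by omega
    rw [e1]
  rw [Finset.sum_congr rfl hrw]
  have hn1 : p ≤ n - 1 := by omega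
  have hIco : Finset.Ico p n = Finset.Ico p ((n-1)+1) := by congr 1; omega
  rw [hIco, sum_by_parts s g p (n-1) hp hn1]
  have e2 : s (n-1) * g (n-1) = |E (j+n+(n-1)) - E (j+n+(n-1)+1)| := by
    have h3 : g (n-1) = g (n-1) - g ((n-1)+1) := by
      have : (n-1)+1 = n := by omega
      rw [this, hgn, sub_zero]
    rw [h3, hterm]
  rw [e2, Finset.sum_congr rfl (fun r _ => hterm r)]
  rw [Finset.sum_Ico_succ_top hn1 (fun r => |E (j+n+r) - E (j+n+r+1)|)]
  have e3 : s (p-1) * g p = σf (j+n+p-1) * (E (j+n+p) - E (j+2*n)) := by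
    simp only [hs, hg]
    congr 2
    omega
  rw [← e3]
  ring

lemma run_tail_nonneg (hn : 2 ≤ n) (hE : ∀ k, E (k + n) = E k) (hσ : ∀ k, σf (k + n) = σf k)
    (hσ1 : ∀ k, |σf k| = 1)
    (hcompat : ∀ k, σf k * (E k - E (k+1)) = |E k - E (k+1)|)
    (j p : ℕ) (hp : 1 ≤ p) (hpn : p < n) :
    0 ≤ ∑ r ∈ Finset.Ico p n, (σf (j+r) - σf (j+r+(n-1))) * (E (j+r) - E (j+n)) := by
  rw [run_parts hn hE hσ hσ1 hcompat j p hp hpn]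
  have htel : E (j+n+p) - E (j+2*n) = ∑ r ∈ Finset.Ico p n, (E (j+n+r) - E (j+n+r+1)) := by
    have h0 : ∀ r, (fun r => E (j+n+r)) r - (fun r => E (j+n+r)) (r+1)
        = E (j+n+r) - E (j+n+r+1) := by
      intro r; simp only
      have : j + n + (r+1) = j + n + r + 1 := by omega
      rw [this]
    have := telescope (fun r => E (j+n+r)) p n (le_of_lt hpn)
    rw [Finset.sum_congr rfl (fun r _ => h0 r)] at this
    rw [← this, show j+n+n = j+2*n from by omega]
  have habs : |E (j+n+p) - E (j+2*n)| ≤ ∑ r ∈ Finset.Ico p n, |E (j+n+r) - E (j+n+r+1)| := by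
    rw [htel]
    exact Finset.abs_sum_le_sum_abs _ _
  have hb : σf (j+n+p-1) * (E (j+n+p) - E (j+2*n)) ≤ |E (j+n+p) - E (j+2*n)| := by
    calc σf (j+n+p-1) * (E (j+n+p) - E (j+2*n))
        ≤ |σf (j+n+p-1) * (E (j+n+p) - E (j+2*n))| := le_abs_self _
      _ = |σf (j+n+p-1)| * |E (j+n+p) - E (j+2*n)| := abs_mul _ _
      _ = |E (j+n+p) - E (j+2*n)| := by rw [hσ1]; ring
  linarith

lemma run_prefix_nonneg (hn : 2 ≤ n) (hE : ∀ k, E (k + n) = E k) (hσ : ∀ k, σf (k + n) = σf k)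
    (hσ1 : ∀ k, |σf k| = 1)
    (hcompat : ∀ k, σf k * (E k - E (k+1)) = |E k - E (k+1)|)
    (j q : ℕ) (hq : 1 ≤ q) (hqn : q < n) :
    0 ≤ ∑ r ∈ Finset.Ico 1 (q+1), (σf (j+r) - σf (j+r+(n-1))) * (E (j+r) - E (j+n)) := by
  set s : ℕ → ℝ := fun r => σf (j+n+r) with hs
  set g : ℕ → ℝ := fun r => E (j+n+r) - E (j+2*n) with hg
  have hterm : ∀ r : ℕ, s r * (g r - g (r+1)) = |E (j+n+r) - E (j+n+r+1)| := by
    intro r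
    have h1 : g r - g (r+1) = E (j+n+r) - E (j+n+r+1) := by
      simp only [hg]
      have : j + n + (r+1) = j + n + r + 1 := by omega
      rw [this]; ring
    rw [h1]
    exact hcompat (j+n+r)
  have hrw : ∀ r ∈ Finset.Ico 1 (q+1),
      (σf (j+r) - σf (j+r+(n-1))) * (E (j+r) - E (j+n)) = (s r - s (r-1)) * g r := by
    intro r hr
    rw [Finset.mem_Ico] at hr
    have := run_rewrite (by omega) hE hσ j r hr.1
    rw [this]
    simp only [hs, hg]
    have e1 : j + n + r - 1 = j + n + (r - 1) := by omega
    rw [e1]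
  rw [Finset.sum_congr rfl hrw, sum_by_parts s g 1 q le_rfl hq]
  -- = s q * g q - s 0 * g 1 + ∑_{Ico 1 q} s r (g r - g (r+1))
  have hsg1 : - (s 0 * g 1) = |E (j+n) - E (j+n+1)| := by
    have h1 : g 1 = -(E (j+n) - E (j+n+1)) := by
      simp only [hg]
      have e1 : E (j+2*n) = E (j+n) := by
        have := hE (j+n); rw [← this]; congr 1; omega
      rw [e1]; ring
    have h2 : s 0 = σf (j+n) := by simp only [hs, Nat.add_zero]
    rw [h1, h2]
    calc -(σf (j+n) * -(E (j+n) - E (j+n+1)))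
        = σf (j+n) * (E (j+n) - E (j+n+1)) := by ring
      _ = |E (j+n) - E (j+n+1)| := hcompat (j+n)
  have htel0 : E (j+n) - E (j+n+q) = ∑ r ∈ Finset.Ico 0 q, (E (j+n+r) - E (j+n+r+1)) := by
    have h0 : ∀ r, (fun r => E (j+n+r)) r - (fun r => E (j+n+r)) (r+1)
        = E (j+n+r) - E (j+n+r+1) := by
      intro r; simp only
      have : j + n + (r+1) = j + n + r + 1 := by omega
      rw [this]
    have := telescope (fun r => E (j+n+r)) 0 q (by omega)
    rw [Finset.sum_congr rfl (fun r _ => h0 r)] at this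
    rw [← this, Nat.add_zero]
  have hgq : g q = -(E (j+n) - E (j+n+q)) := by
    simp only [hg]
    have e1 : E (j+2*n) = E (j+n) := by
      have := hE (j+n); rw [← this]; congr 1; omega
    rw [e1]; ring
  have habs : |E (j+n) - E (j+n+q)|
      ≤ |E (j+n) - E (j+n+1)| + ∑ r ∈ Finset.Ico 1 q, |E (j+n+r) - E (j+n+r+1)| := by
    calc |E (j+n) - E (j+n+q)| ≤ ∑ r ∈ Finset.Ico 0 q, |E (j+n+r) - E (j+n+r+1)| := by
          rw [htel0]; exact Finset.abs_sum_le_sum_abs _ _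
      _ = |E (j+n) - E (j+n+1)| + ∑ r ∈ Finset.Ico 1 q, |E (j+n+r) - E (j+n+r+1)| := by
          rw [Finset.sum_eq_sum_Ico_succ_bot (by omega : 0 < q)]
          norm_num
  have hb : - (s q * g q) ≤ |E (j+n) - E (j+n+q)| := by
    have h3 : |s q * g q| = |E (j+n) - E (j+n+q)| := by
      rw [abs_mul]
      simp only [hs]
      rw [hσ1, hgq, abs_neg]
      ring
    have := neg_abs_le (s q * g q)
    linarith [this, h3.le]
  rw [Finset.sum_congr rfl (fun r _ => hterm r)]
  linarith

lemma run_total (hn : 2 ≤ n) (hE : ∀ k, E (k + n) = E k) (hσ : ∀ k, σf (k + n) = σf k)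
    (hσ1 : ∀ k, |σf k| = 1)
    (hcompat : ∀ k, σf k * (E k - E (k+1)) = |E k - E (k+1)|) (j : ℕ) :
    ∑ r ∈ Finset.Ico 1 n, (σf (j+r) - σf (j+r+(n-1))) * (E (j+r) - E (j+n))
      = ∑ k ∈ Finset.range n, |E k - E (k+1)| := by
  rw [run_parts hn hE hσ hσ1 hcompat j 1 le_rfl (by omega)]
  have hsg1 : σf (j+n+1-1) * (E (j+n+1) - E (j+2*n)) = - |E (j+n) - E (j+n+1)| := by
    have e0 : j + n + 1 - 1 = j + n := by omega
    have e1 : E (j+2*n) = E (j+n) := by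
      have := hE (j+n); rw [← this]; congr 1; omega
    rw [e0, e1]
    calc σf (j+n) * (E (j+n+1) - E (j+n))
        = -(σf (j+n) * (E (j+n) - E (j+n+1))) := by ring
      _ = -|E (j+n) - E (j+n+1)| := by rw [hcompat (j+n)]
  rw [hsg1]
  have hfull : |E (j+n) - E (j+n+1)| + ∑ r ∈ Finset.Ico 1 n, |E (j+n+r) - E (j+n+r+1)|
      = ∑ r ∈ Finset.range n, |E (j+n+r) - E (j+n+r+1)| := by
    rw [Finset.range_eq_Ico, Finset.sum_eq_sum_Ico_succ_bot (by omega : 0 < n)]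
    norm_num
  have hshift : ∑ r ∈ Finset.range n, |E (j+n+r) - E (j+n+r+1)|
      = ∑ k ∈ Finset.range n, |E k - E (k+1)| := by
    have hper : ∀ k, (fun k => |E k - E (k+1)|) (k + n) = (fun k => |E k - E (k+1)|) k := by
      intro k; simp only
      rw [hE k]
      have : k + n + 1 = (k+1) + n := by omega
      rw [this, hE (k+1)]
    have := sum_shift (fun k => |E k - E (k+1)|) n hper (j+n)
    rw [← this]
  linarith [hfull, hshift]

lemma run_pos (hn : 2 ≤ n) (hE : ∀ k, E (k + n) = E k) (hσ : ∀ k, σf (k + n) = σf k)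
    (hσ1 : ∀ k, |σf k| = 1)
    (hcompat : ∀ k, σf k * (E k - E (k+1)) = |E k - E (k+1)|)
    (hν : 0 < ∑ k ∈ Finset.range n, |E k - E (k+1)|)
    (j : ℕ) (W : ℕ → ℝ)
    (hWpos : ∀ r, 1 ≤ r → r < n → 0 < W r)
    (hWmono : (∀ r, 1 ≤ r → r + 1 < n → W r ≤ W (r+1))
            ∨ (∀ r, 1 ≤ r → r + 1 < n → W (r+1) ≤ W r)) :
    0 < ∑ r ∈ Finset.Ico 1 n, W r
          * ((σf (j+r) - σf (j+r+(n-1))) * (E (j+r) - E (j+n))) := by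
  set b : ℕ → ℝ := fun r => (σf (j+r) - σf (j+r+(n-1))) * (E (j+r) - E (j+n)) with hb
  have htotal : ∑ r ∈ Finset.Ico 1 n, b r = ∑ k ∈ Finset.range n, |E k - E (k+1)| :=
    run_total hn hE hσ hσ1 hcompat j
  rcases hWmono with hW | hW
  · have h1 := abel_tail W b n hn
      (fun p hp hpn => run_tail_nonneg hn hE hσ hσ1 hcompat j p hp hpn) hW
    have h2 : 0 < W 1 * ∑ r ∈ Finset.Ico 1 n, b r := by
      rw [htotal]
      exact mul_pos (hWpos 1 le_rfl (by omega)) hν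
    linarith
  · have h1 := abel_prefix W b n hn
      (fun q hq hqn => run_prefix_nonneg hn hE hσ hσ1 hcompat j q hq hqn) hW
    have h2 : 0 < W (n-1) * ∑ r ∈ Finset.Ico 1 n, b r := by
      rw [htotal]
      exact mul_pos (hWpos (n-1) (by omega) (by omega)) hν
    linarith

end Run

lemma Ioo_subset_good : Ioo (0:ℝ) (2*π) ⊆ {θ : ℝ | ∀ k : ℤ, θ ≠ 2 * π * k} := by
  intro θ hθ k hk
  rcases le_or_gt k 0 with h | h
  · have hk' : (k:ℝ) ≤ 0 := by exact_mod_cast h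
    have h1 := hθ.1
    rw [hk] at h1
    nlinarith [pi_pos]
  · have hk' : (1:ℝ) ≤ (k:ℝ) := by exact_mod_cast h
    have h2 := hθ.2
    rw [hk] at h2
    nlinarith [pi_pos]

lemma gamma_hasDeriv {Γ : ℝ → ℝ} (hC2 : ContDiffOn ℝ 2 Γ {θ : ℝ | ∀ k : ℤ, θ ≠ 2 * π * k}) :
    ∀ x ∈ Ioo (0:ℝ) (2*π), HasDerivAt Γ (deriv Γ x) x := by
  intro x hx
  have h1 : DifferentiableOn ℝ Γ (Ioo 0 (2*π)) :=
    (hC2.mono Ioo_subset_good).differentiableOn (by norm_num)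
  exact (h1.differentiableAt (isOpen_Ioo.mem_nhds hx)).hasDerivAt

lemma gamma_deriv_mono {Γ : ℝ → ℝ}
    (hC2 : ContDiffOn ℝ 2 Γ {θ : ℝ | ∀ k : ℤ, θ ≠ 2 * π * k})
    (hconv : (∀ θ ∈ Ioo (0 : ℝ) (2 * π), 0 < deriv (deriv Γ) θ) ∨
             (∀ θ ∈ Ioo (0 : ℝ) (2 * π), deriv (deriv Γ) θ < 0)) :
    MonotoneOn (deriv Γ) (Ioo (0:ℝ) (2*π)) ∨ AntitoneOn (deriv Γ) (Ioo (0:ℝ) (2*π)) := by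
  have hcont : ContinuousOn (deriv Γ) (Ioo (0:ℝ) (2*π)) :=
    (hC2.mono Ioo_subset_good).continuousOn_deriv_of_isOpen isOpen_Ioo (by norm_num)
  rcases hconv with h | h
  · exact Or.inl (strictMonoOn_of_deriv_pos (convex_Ioo _ _) hcont
      (by rwa [interior_Ioo])).monotoneOn
  · exact Or.inr (strictAntiOn_of_deriv_neg (convex_Ioo _ _) hcont
      (by rwa [interior_Ioo])).antitoneOn

lemma key (m : ℕ) (hm : 1 ≤ m) (Γ : ℝ → ℝ)
    (hper : Function.Periodic Γ (2 * π))
    (hC2 : ContDiffOn ℝ 2 Γ {θ : ℝ | ∀ k : ℤ, θ ≠ 2 * π * k})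
    (hmono : ∀ θ ∈ Ioo (0 : ℝ) (2 * π), 0 < deriv Γ θ)
    (hconv : (∀ θ ∈ Ioo (0 : ℝ) (2 * π), 0 < deriv (deriv Γ) θ) ∨
             (∀ θ ∈ Ioo (0 : ℝ) (2 * π), deriv (deriv Γ) θ < 0))
    (T : ℝ) (φ ψ : ℝ → Fin m → ℝ)
    (hφcone : ∀ t ∈ Icc (0 : ℝ) T, φ t ∈ phaseCone)
    (hψcone : ∀ t ∈ Icc (0 : ℝ) T, ψ t ∈ phaseCone)
    (hφsol : ∀ t ∈ Icc (0 : ℝ) T, ∀ i, HasDerivAt (fun s => φ s i) (relVF Γ (φ t) i) t)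
    (hψsol : ∀ t ∈ Icc (0 : ℝ) T, ∀ i, HasDerivAt (fun s => ψ s i) (relVF Γ (ψ t) i) t)
    (hne : ∀ t ∈ Icc (0 : ℝ) T, φ t ≠ ψ t)
    (t : ℝ) (ht : t ∈ Icc (0:ℝ) T) :
    ∃ g : ℝ → ℝ, ∃ D : ℝ, (∀ u, g u ≤ norm1 (φ u - ψ u)) ∧ g t = norm1 (φ t - ψ t)
      ∧ HasDerivAt g D t ∧ 0 < D := by
  have hn2 : 2 ≤ m + 1 := by omega
  set Et : ℕ → ℝ := extF (φ t - ψ t) with hEt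
  have hEper : ∀ k, Et (k + (m+1)) = Et k := fun k => extF_add_period _ k
  set σf : ℕ → ℝ := fun k => if Et k - Et (k+1) < 0 then -1 else 1 with hσf
  have hσ1 : ∀ k, |σf k| = 1 := by
    intro k; simp only [hσf]; split
    · rw [abs_neg, abs_one]
    · rw [abs_one]
  have hσcompat : ∀ k, σf k * (Et k - Et (k+1)) = |Et k - Et (k+1)| := by
    intro k; simp only [hσf]; split
    · rename_i hneg
      rw [abs_of_neg hneg]; ring
    · rename_i hpos
      rw [abs_of_nonneg (by linarith [not_lt.mp hpos])]; ring
  have hσper : ∀ k, σf (k + (m+1)) = σf k := by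
    intro k; simp only [hσf]
    rw [hEper k, show k + (m+1) + 1 = (k+1) + (m+1) from by omega, hEper (k+1)]
  -- positivity of the norm
  have hν : 0 < ∑ k ∈ Finset.range (m+1), |Et k - Et (k+1)| := by
    have hnonneg : ∀ k ∈ Finset.range (m+1), 0 ≤ |Et k - Et (k+1)| := fun k _ => abs_nonneg _
    rcases lt_or_eq_of_le (Finset.sum_nonneg hnonneg) with h | h
    · exact h
    · exfalso
      have hall : ∀ k ∈ Finset.range (m+1), |Et k - Et (k+1)| = 0 :=
        (Finset.sum_eq_zero_iff_of_nonneg hnonneg).mp h.symm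
      have hEk : ∀ k, k ≤ m → Et k = 0 := by
        intro k
        induction k with
        | zero => intro _; exact extF_zero _
        | succ k ih =>
          intro hk
          have h1 := hall k (Finset.mem_range.mpr (by omega))
          have h2 := ih (by omega)
          have h3 : Et k - Et (k+1) = 0 := abs_eq_zero.mp h1
          linarith
      apply sub_ne_zero.mpr (hne t ht)
      funext i
      have h1 : Et ((i:ℕ)+1) = (φ t - ψ t) i := by
        rw [hEt, extF_eq _ ((i:ℕ)+1) (by omega) (by omega)]
        exact vmk_eq_fin _ _ i (by omega)
      rw [Pi.zero_apply, ← h1, hEk _ (by omega)]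
  -- the comparison function g
  set g : ℝ → ℝ := fun u => ∑ k ∈ Finset.range (m+1), σf k *
      (extF (φ u - ψ u) k - extF (φ u - ψ u) (k+1)) with hgdef
  have hle : ∀ u, g u ≤ norm1 (φ u - ψ u) := by
    intro u
    rw [norm1_eq hm (φ u - ψ u), hgdef]
    apply Finset.sum_le_sum
    intro k _
    calc σf k * (extF (φ u - ψ u) k - extF (φ u - ψ u) (k+1))
        ≤ |σf k * (extF (φ u - ψ u) k - extF (φ u - ψ u) (k+1))| := le_abs_self _
      _ = |σf k| * |extF (φ u - ψ u) k - extF (φ u - ψ u) (k+1)| := abs_mul _ _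
      _ = |extF (φ u - ψ u) k - extF (φ u - ψ u) (k+1)| := by rw [hσ1 k, one_mul]
  have heq : g t = norm1 (φ t - ψ t) := by
    rw [norm1_eq hm (φ t - ψ t), hgdef]
    exact Finset.sum_congr rfl (fun k _ => hσcompat k)
  -- the derivative
  set Ed : ℕ → ℝ := extF (relVF Γ (φ t) - relVF Γ (ψ t)) with hEd
  have hEdper : ∀ k, Ed (k + (m+1)) = Ed k := fun k => extF_add_period _ k
  have hcoord : ∀ k, HasDerivAt (fun u => extF (φ u - ψ u) k) (Ed k) t := by
    intro k
    rcases Nat.eq_zero_or_pos (k % (m+1)) with h0 | h0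
    · have h1 : (fun u => extF (φ u - ψ u) k) = fun _ => (0:ℝ) := by
        funext u; simp [extF, h0]
      have h2 : Ed k = 0 := by simp [hEd, extF, h0]
      rw [h1, h2]
      exact hasDerivAt_const t 0
    · have hkn : k % (m+1) < m + 1 := Nat.mod_lt k (by omega)
      set i : Fin m := ⟨k % (m+1) - 1, by omega⟩ with hi
      have h1 : (fun u => extF (φ u - ψ u) k) = fun u => φ u i - ψ u i := by
        funext u
        rw [extF_eq' (φ u - ψ u) k (by omega)]
        rfl
      have h2 : Ed k = relVF Γ (φ t) i - relVF Γ (ψ t) i := by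
        rw [hEd, extF_eq' _ k (by omega)]
        rfl
      rw [h1, h2]
      exact (hφsol t ht i).sub (hψsol t ht i)
  set D : ℝ := ∑ k ∈ Finset.range (m+1), σf k * (Ed k - Ed (k+1)) with hDdef
  have hgD : HasDerivAt g D t := by
    rw [hgdef, hDdef]
    apply HasDerivAt.fun_sum
    intro k _
    exact ((hcoord k).sub (hcoord (k+1))).const_mul (σf k)
  -- rewrite D as ∑ c k * Ed k
  have hD1 : D = ∑ k ∈ Finset.range (m+1), (σf k - σf (k + (m+1-1))) * Ed k := by
    rw [hDdef]
    have h1 : ∑ k ∈ Finset.range (m+1), σf k * (Ed k - Ed (k+1))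
        = ∑ k ∈ Finset.range (m+1), σf k * Ed k
          - ∑ k ∈ Finset.range (m+1), σf k * Ed (k+1) := by
      rw [← Finset.sum_sub_distrib]
      exact Finset.sum_congr rfl (fun k _ => by ring)
    have h2 : ∑ k ∈ Finset.range (m+1), σf k * Ed (k+1)
        = ∑ k ∈ Finset.range (m+1), σf (k + (m+1-1)) * Ed k := by
      have hstep : ∀ k, σf k * Ed (k+1) = (fun k => σf (k + (m+1-1)) * Ed k) (k+1) := by
        intro k; simp only
        rw [show k+1+(m+1-1) = k + (m+1) from by omega, hσper k]
      have hFper : (fun k => σf (k + (m+1-1)) * Ed k) (m+1)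
          = (fun k => σf (k + (m+1-1)) * Ed k) 0 := by
        simp only
        rw [show (m+1) + (m+1-1) = (m+1-1) + (m+1) from by omega, hσper (m+1-1)]
        have h3 : Ed (m+1) = Ed 0 := by
          have := hEdper 0; rwa [Nat.zero_add] at this
        rw [h3, Nat.zero_add]
      rw [Finset.sum_congr rfl (fun k _ => hstep k),
        sum_shift_one (fun k => σf (k + (m+1-1)) * Ed k) (m+1) hFper]
    rw [h1, h2, ← Finset.sum_sub_distrib]
    exact Finset.sum_congr rfl (fun k _ => by ring)
  -- Ed in terms of Gd
  set Gd : ℕ → ℝ := fun i => (∑ r ∈ Finset.Ico 1 (m+1), Γ (extF (φ t) i - extF (φ t) (i+r)))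
      - ∑ r ∈ Finset.Ico 1 (m+1), Γ (extF (ψ t) i - extF (ψ t) (i+r)) with hGd
  have hEdGd : ∀ i ∈ Finset.range (m+1), Ed i = Gd i - Gd 0 := by
    intro i hi
    rw [Finset.mem_range] at hi
    rcases Nat.eq_zero_or_pos i with h0 | h0
    · subst h0
      rw [hEd]
      rw [extF_zero]
      rw [sub_self]
    · have hi1 : 1 ≤ i := h0
      have him : i ≤ m := by omega
      have h1 : Ed i = relVF Γ (φ t) ⟨i-1, by omega⟩ - relVF Γ (ψ t) ⟨i-1, by omega⟩ := by
        rw [hEd, extF_eq _ i hi1 him]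
        rfl
      rw [h1, relVF_ext Γ (φ t) hm i hi1 him, relVF_ext Γ (ψ t) hm i hi1 him]
      simp only [hGd, Nat.zero_add]
      ring
  have hcsum : ∑ k ∈ Finset.range (m+1), (σf k - σf (k + (m+1-1))) = 0 := by
    rw [Finset.sum_sub_distrib]
    have h1 : ∑ k ∈ Finset.range (m+1), σf (k + (m+1-1))
        = ∑ k ∈ Finset.range (m+1), σf k := by
      have h2 := sum_shift σf (m+1) hσper (m+1-1)
      rw [← h2]
      exact Finset.sum_congr rfl (fun k _ => by rw [Nat.add_comm])
    rw [h1, sub_self]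
  have hD2 : D = ∑ k ∈ Finset.range (m+1), (σf k - σf (k + (m+1-1))) * Gd k := by
    rw [hD1, Finset.sum_congr rfl (fun k hk => by rw [hEdGd k hk])]
    have h1 : ∀ k, (σf k - σf (k + (m+1-1))) * (Gd k - Gd 0)
        = (σf k - σf (k + (m+1-1))) * Gd k - (σf k - σf (k + (m+1-1))) * Gd 0 := by
      intro k; ring
    rw [Finset.sum_congr rfl (fun k _ => h1 k), Finset.sum_sub_distrib,
      ← Finset.sum_mul, hcsum, zero_mul, sub_zero]
  -- lift
  have hGdlift : ∀ i, Gd i = ∑ r ∈ Finset.Ico 1 (m+1),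
      (Γ (liftP (φ t) i - liftP (φ t) (i+r)) - Γ (liftP (ψ t) i - liftP (ψ t) (i+r))) := by
    intro i
    simp only [hGd]
    rw [← Finset.sum_sub_distrib]
    exact Finset.sum_congr rfl (fun r _ => by
      rw [periodic_lift hper (φ t) i (i+r), periodic_lift hper (ψ t) i (i+r)])
  set F2 : ℕ → ℕ → ℝ := fun a b => (σf a - σf (a + (m+1-1))) *
      (Γ (liftP (φ t) a - liftP (φ t) b) - Γ (liftP (ψ t) a - liftP (ψ t) b)) with hF2
  have hD3 : D = ∑ i ∈ Finset.range (m+1), ∑ r ∈ Finset.Ico 1 (m+1), F2 i (i+r) := by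
    rw [hD2]
    apply Finset.sum_congr rfl
    intro i _
    rw [hGdlift i, Finset.mul_sum]
  have hF2per1 : ∀ a b, F2 (a + (m+1)) b = F2 a b := by
    intro a b
    simp only [hF2]
    rw [hσper a, show a + (m+1) + (m+1-1) = (a + (m+1-1)) + (m+1) from by omega,
      hσper (a + (m+1-1)), liftP_add_period, liftP_add_period]
    have e1 : ∀ x : ℝ, Γ (x + 2*π - liftP (φ t) b) = Γ (x - liftP (φ t) b) := by
      intro x
      rw [show x + 2*π - liftP (φ t) b = (x - liftP (φ t) b) + 2*π from by ring, hper _]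
    have e2 : ∀ x : ℝ, Γ (x + 2*π - liftP (ψ t) b) = Γ (x - liftP (ψ t) b) := by
      intro x
      rw [show x + 2*π - liftP (ψ t) b = (x - liftP (ψ t) b) + 2*π from by ring, hper _]
    rw [e1, e2]
  have hF2per2 : ∀ a b, F2 a (b + (m+1)) = F2 a b := by
    intro a b
    simp only [hF2]
    rw [liftP_add_period, liftP_add_period]
    have e1 : Γ (liftP (φ t) a - (liftP (φ t) b + 2*π)) = Γ (liftP (φ t) a - liftP (φ t) b) := by
      rw [show liftP (φ t) a - (liftP (φ t) b + 2*π)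
          = (liftP (φ t) a - liftP (φ t) b) - 2*π from by ring]
      rw [← hper (liftP (φ t) a - liftP (φ t) b - 2*π)]
      congr 1; ring
    have e2 : Γ (liftP (ψ t) a - (liftP (ψ t) b + 2*π)) = Γ (liftP (ψ t) a - liftP (ψ t) b) := by
      rw [show liftP (ψ t) a - (liftP (ψ t) b + 2*π)
          = (liftP (ψ t) a - liftP (ψ t) b) - 2*π from by ring]
      rw [← hper (liftP (ψ t) a - liftP (ψ t) b - 2*π)]
      congr 1; ring
    rw [e1, e2]
  have hD4 : D = ∑ j ∈ Finset.range (m+1), ∑ r ∈ Finset.Ico 1 (m+1), F2 (j+r) (j+(m+1)) := by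
    rw [hD3]
    exact pair_reindex (m+1) F2 hF2per1 hF2per2
  -- per-j positivity
  have hjpos : ∀ j ∈ Finset.range (m+1),
      0 < ∑ r ∈ Finset.Ico 1 (m+1), F2 (j+r) (j+(m+1)) := by
    intro j _
    set Pφ : ℕ → ℝ := liftP (φ t) with hPφ
    set Pψ : ℕ → ℝ := liftP (ψ t) with hPψ
    have hEtlift : ∀ k, Pφ k - Pψ k = Et k := by
      intro k
      rw [hPφ, hPψ, hEt, extF_sub]
      unfold liftP
      ring
    set Z : ℝ → ℕ → ℝ := fun s k => Pψ k + s * (Pφ k - Pψ k) with hZ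
    have hZ1 : ∀ k, Z 1 k = Pφ k := by intro k; simp only [hZ]; ring
    have hZ0 : ∀ k, Z 0 k = Pψ k := by intro k; simp only [hZ]; ring
    have hPφmono : StrictMono Pφ := liftP_strictMono (hφcone t ht)
    have hPψmono : StrictMono Pψ := liftP_strictMono (hψcone t ht)
    have hZmono : ∀ s ∈ Icc (0:ℝ) 1, ∀ a b : ℕ, a < b → Z s a < Z s b := by
      intro s hs a b hab
      have h1 : Pφ a < Pφ b := hPφmono hab
      have h2 : Pψ a < Pψ b := hPψmono hab
      simp only [hZ]
      have k1 : (1-s) * min (Pψ b - Pψ a) (Pφ b - Pφ a) ≤ (1-s) * (Pψ b - Pψ a) :=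
        mul_le_mul_of_nonneg_left (min_le_left _ _) (by linarith [hs.2])
      have k2 : s * min (Pψ b - Pψ a) (Pφ b - Pφ a) ≤ s * (Pφ b - Pφ a) :=
        mul_le_mul_of_nonneg_left (min_le_right _ _) hs.1
      have hc : 0 < min (Pψ b - Pψ a) (Pφ b - Pφ a) := lt_min (by linarith) (by linarith)
      nlinarith [k1, k2, hc]
    have hZper : ∀ s (k : ℕ), Z s (k+(m+1)) = Z s k + 2*π := by
      intro s k
      simp only [hZ, hPφ, hPψ]
      rw [liftP_add_period, liftP_add_period]
      ring
    set Hj : ℝ → ℝ := fun s => ∑ r ∈ Finset.Ico 1 (m+1), (σf (j+r) - σf (j+r+(m+1-1))) *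
        Γ (2*π + Z s (j+r) - Z s (j+(m+1))) with hHj
    have hw1 : ∑ r ∈ Finset.Ico 1 (m+1), F2 (j+r) (j+(m+1)) = Hj 1 - Hj 0 := by
      simp only [hHj]
      rw [← Finset.sum_sub_distrib]
      apply Finset.sum_congr rfl
      intro r _
      rw [hZ1, hZ1, hZ0, hZ0]
      have e1 : Γ (2*π + Pφ (j+r) - Pφ (j+(m+1))) = Γ (Pφ (j+r) - Pφ (j+(m+1))) := by
        rw [show 2*π + Pφ (j+r) - Pφ (j+(m+1))
            = (Pφ (j+r) - Pφ (j+(m+1))) + 2*π from by ring, hper _]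
      have e2 : Γ (2*π + Pψ (j+r) - Pψ (j+(m+1))) = Γ (Pψ (j+r) - Pψ (j+(m+1))) := by
        rw [show 2*π + Pψ (j+r) - Pψ (j+(m+1))
            = (Pψ (j+r) - Pψ (j+(m+1))) + 2*π from by ring, hper _]
      rw [e1, e2]
      simp only [hF2, hPφ, hPψ]
      ring
    have harg : ∀ s ∈ Icc (0:ℝ) 1, ∀ r, 1 ≤ r → r < m+1 →
        (2*π + Z s (j+r) - Z s (j+(m+1))) ∈ Ioo (0:ℝ) (2*π) := by
      intro s hs r hr1 hr2
      have h1 : Z s j < Z s (j+r) := hZmono s hs j (j+r) (by omega)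
      have h2 : Z s (j+r) < Z s (j+(m+1)) := hZmono s hs (j+r) (j+(m+1)) (by omega)
      have h3 : Z s (j+(m+1)) = Z s j + 2*π := hZper s j
      constructor
      · rw [h3]; linarith
      · linarith
    have hHjderiv : ∀ s ∈ Icc (0:ℝ) 1, HasDerivAt Hj
        (∑ r ∈ Finset.Ico 1 (m+1), (σf (j+r) - σf (j+r+(m+1-1))) *
          (deriv Γ (2*π + Z s (j+r) - Z s (j+(m+1))) * (Et (j+r) - Et (j+(m+1))))) s := by
      intro s hs
      simp only [hHj]
      apply HasDerivAt.fun_sum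
      intro r hr
      rw [Finset.mem_Ico] at hr
      have hinner : HasDerivAt (fun u => 2*π + Z u (j+r) - Z u (j+(m+1)))
          (Et (j+r) - Et (j+(m+1))) s := by
        have hid : HasDerivAt (fun u : ℝ => u) 1 s := hasDerivAt_id s
        have ha : HasDerivAt (fun u : ℝ => u * (Pφ (j+r) - Pψ (j+r)))
            (Pφ (j+r) - Pψ (j+r)) s := by
          simpa using hid.mul_const (Pφ (j+r) - Pψ (j+r))
        have hb : HasDerivAt (fun u : ℝ => u * (Pφ (j+(m+1)) - Pψ (j+(m+1))))
            (Pφ (j+(m+1)) - Pψ (j+(m+1))) s := by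
          simpa using hid.mul_const (Pφ (j+(m+1)) - Pψ (j+(m+1)))
        have h1 := ((ha.const_add (Pψ (j+r))).const_add (2*π)).sub
          (hb.const_add (Pψ (j+(m+1))))
        have heqfun : (fun u => 2*π + Z u (j+r) - Z u (j+(m+1)))
            = fun u : ℝ => 2*π + (Pψ (j+r) + u * (Pφ (j+r) - Pψ (j+r)))
              - (Pψ (j+(m+1)) + u * (Pφ (j+(m+1)) - Pψ (j+(m+1)))) := by
          funext u; simp only [hZ]
        have heqd : Et (j+r) - Et (j+(m+1))
            = (Pφ (j+r) - Pψ (j+r)) - (Pφ (j+(m+1)) - Pψ (j+(m+1))) := by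
          rw [hEtlift (j+r), hEtlift (j+(m+1))]
        rw [heqfun, heqd]
        exact h1
      have hΓd : HasDerivAt Γ (deriv Γ (2*π + Z s (j+r) - Z s (j+(m+1))))
          (2*π + Z s (j+r) - Z s (j+(m+1))) :=
        gamma_hasDeriv hC2 _ (harg s hs r hr.1 hr.2)
      exact (hΓd.comp s hinner).const_mul _
    have hHD : ∀ s ∈ Icc (0:ℝ) 1,
        0 < ∑ r ∈ Finset.Ico 1 (m+1), (σf (j+r) - σf (j+r+(m+1-1))) *
          (deriv Γ (2*π + Z s (j+r) - Z s (j+(m+1))) * (Et (j+r) - Et (j+(m+1)))) := by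
      intro s hs
      set W : ℕ → ℝ := fun r => deriv Γ (Z s (j+r) - Z s j) with hW
      have hargeq : ∀ r : ℕ, 2*π + Z s (j+r) - Z s (j+(m+1)) = Z s (j+r) - Z s j := by
        intro r; rw [hZper s j]; ring
      have hform : ∑ r ∈ Finset.Ico 1 (m+1), (σf (j+r) - σf (j+r+(m+1-1))) *
            (deriv Γ (2*π + Z s (j+r) - Z s (j+(m+1))) * (Et (j+r) - Et (j+(m+1))))
          = ∑ r ∈ Finset.Ico 1 (m+1), W r *
            ((σf (j+r) - σf (j+r+(m+1-1))) * (Et (j+r) - Et (j+(m+1)))) := by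
        apply Finset.sum_congr rfl
        intro r _
        rw [hargeq r]
        simp only [hW]
        ring
      rw [hform]
      have hargIoo : ∀ r, 1 ≤ r → r < m+1 → (Z s (j+r) - Z s j) ∈ Ioo (0:ℝ) (2*π) := by
        intro r h1 h2
        have := harg s hs r h1 h2
        rwa [hargeq r] at this
      apply run_pos hn2 hEper hσper hσ1 hσcompat hν j W
      · intro r h1 h2
        exact hmono _ (hargIoo r h1 h2)
      · rcases gamma_deriv_mono hC2 hconv with hmo | hmo
        · left
          intro r h1 h2
          simp only [hW]
          apply hmo (hargIoo r h1 (by omega)) (hargIoo (r+1) (by omega) h2)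
          have := hZmono s hs (j+r) (j+(r+1)) (by omega)
          linarith [this]
        · right
          intro r h1 h2
          simp only [hW]
          apply hmo (hargIoo r h1 (by omega)) (hargIoo (r+1) (by omega) h2)
          have := hZmono s hs (j+r) (j+(r+1)) (by omega)
          linarith [this]
    have hcont : ContinuousOn Hj (Icc 0 1) :=
      fun s hs => ((hHjderiv s hs).continuousAt).continuousWithinAt
    have hmonoH : StrictMonoOn Hj (Icc (0:ℝ) 1) := by
      apply strictMonoOn_of_deriv_pos (convex_Icc (0:ℝ) 1) hcont
      intro s hs
      rw [interior_Icc] at hs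
      rw [(hHjderiv s (Ioo_subset_Icc_self hs)).deriv]
      exact hHD s (Ioo_subset_Icc_self hs)
    have hlt := hmonoH (left_mem_Icc.mpr zero_le_one) (right_mem_Icc.mpr zero_le_one) zero_lt_one
    rw [hw1]
    linarith
  have hDpos : 0 < D := by
    rw [hD4]
    exact Finset.sum_pos hjpos ⟨0, Finset.mem_range.mpr (by omega)⟩
  exact ⟨g, D, hle, heq, hgD, hDpos⟩

end MCE

open MCE

/-- Theorem (expansion for monotone increasing coupling functions):
if the 2π-periodic coupling function `Γ` is C² away from `2πℤ`, monotone
increasing and of constant convexity on `(0,2π)`, then the relative phase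
dynamics are expanding in the cone with respect to the 1-norm: along any two
C¹ solutions staying in the cone and never coinciding, the 1-norm of their
difference strictly increases. -/
theorem monotone_coupling_expanding
    (N : ℕ) (hN : 2 ≤ N) (Γ : ℝ → ℝ)
    (hper : Function.Periodic Γ (2 * π))
    (hC2 : ContDiffOn ℝ 2 Γ {θ : ℝ | ∀ k : ℤ, θ ≠ 2 * π * k})
    (hmono : ∀ θ ∈ Ioo (0 : ℝ) (2 * π), 0 < deriv Γ θ)
    (hconv : (∀ θ ∈ Ioo (0 : ℝ) (2 * π), 0 < deriv (deriv Γ) θ) ∨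
             (∀ θ ∈ Ioo (0 : ℝ) (2 * π), deriv (deriv Γ) θ < 0))
    (T : ℝ) (φ ψ : ℝ → Fin (N - 1) → ℝ)
    (hφC1 : ∀ i, ContDiffOn ℝ 1 (fun t => φ t i) (Icc 0 T))
    (hψC1 : ∀ i, ContDiffOn ℝ 1 (fun t => ψ t i) (Icc 0 T))
    (hφcone : ∀ t ∈ Icc (0 : ℝ) T, φ t ∈ phaseCone)
    (hψcone : ∀ t ∈ Icc (0 : ℝ) T, ψ t ∈ phaseCone)
    (hφsol : ∀ t ∈ Icc (0 : ℝ) T, ∀ i, HasDerivAt (fun s => φ s i) (relVF Γ (φ t) i) t)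
    (hψsol : ∀ t ∈ Icc (0 : ℝ) T, ∀ i, HasDerivAt (fun s => ψ s i) (relVF Γ (ψ t) i) t)
    (hne : ∀ t ∈ Icc (0 : ℝ) T, φ t ≠ ψ t) :
    StrictMonoOn (fun t => norm1 (φ t - ψ t)) (Icc (0 : ℝ) T) := by
  have hm : 1 ≤ N - 1 := by omega
  apply MCE.strictMonoOn_of_right_growth
  · -- continuity
    have hcoordC : ∀ k, ContinuousOn (fun u => extF (φ u - ψ u) k) (Icc 0 T) := by
      intro k
      rcases Nat.eq_zero_or_pos (k % (N-1+1)) with h0 | h0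
      · have h1 : (fun u => extF (φ u - ψ u) k) = fun _ => (0:ℝ) := by
          funext u; simp [MCE.extF, h0]
        rw [h1]; exact continuousOn_const
      · have hkn : k % (N-1+1) < N-1+1 := Nat.mod_lt k (by omega)
        have h1 : (fun u => extF (φ u - ψ u) k)
            = fun u => φ u ⟨k % (N-1+1) - 1, by omega⟩ - ψ u ⟨k % (N-1+1) - 1, by omega⟩ := by
          funext u
          rw [extF_eq' (φ u - ψ u) k (by omega)]
          rfl
        rw [h1]
        intro u hu
        exact (((hφsol u hu _).sub (hψsol u hu _)).continuousAt).continuousWithinAt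
    have h1 : (fun u => norm1 (φ u - ψ u))
        = fun u => ∑ k ∈ Finset.range (N-1+1),
            |extF (φ u - ψ u) k - extF (φ u - ψ u) (k+1)| :=
      funext fun u => MCE.norm1_eq hm _
    rw [h1]
    apply continuousOn_finset_sum
    intro k _
    exact ((hcoordC k).sub (hcoordC (k+1))).abs
  · intro t ht htT
    obtain ⟨g, D, hle, heq, hgD, hD⟩ := MCE.key (N-1) hm Γ hper hC2 hmono hconv T φ ψ
      hφcone hψcone hφsol hψsol hne t ht
    obtain ⟨δ, hδ, hgrow⟩ := MCE.right_growth_of_active (T := T)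
      (fun u _ => hle u) heq hgD hD
    exact ⟨δ, hδ, fun u htu huT huδ => hgrow u htu huT huδ (le_trans ht.1 htu.le)⟩
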